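/- Let A be an associative algebra and M an A-bimodule. A linear map P : M → A is a relative averaging operator if and only if the graph Gr(P) = {(P(u), u) | u ∈ M} is a subalgebra of the diassociative algebra A ⊕ M (with (a,u) ⊣ (b,v) = (a·b, u·b), (a,u) ⊢ (b,v) = (a·b, a·v)), i.e. Gr(P) is closed under both ⊣ and ⊢. -/
import Mathlib

/-- An `A`-bimodule structure on `M` over an associative algebra `A`:
left and right actions that are biadditive and associative/compatible. -/
structure ABimodule (A : Type*) (M : Type*) [Ring A] [AddCommGroup M] where
  lsmul : A → M → M
  rsmul : M → A → M
  lsmul_add : ∀ a u v, lsmul a (u + v) = lsmul a u + lsmul a v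
  add_lsmul : ∀ a b u, lsmul (a + b) u = lsmul a u + lsmul b u
  rsmul_add : ∀ u v a, rsmul (u + v) a = rsmul u a + rsmul v a
  add_rsmul : ∀ u a b, rsmul u (a + b) = rsmul u a + rsmul u b
  mul_lsmul : ∀ a b u, lsmul (a * b) u = lsmul a (lsmul b u)
  rsmul_mul : ∀ u a b, rsmul u (a * b) = rsmul (rsmul u a) b
  lsmul_rsmul : ∀ a u b, rsmul (lsmul a u) b = lsmul a (rsmul u b)

/-- `P : M → A` is a relative averaging operator:
`P(u)·P(v) = P(P(u)·v) = P(u·P(v))`. -/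
def IsRelAvgOp {A M : Type*} [Ring A] [AddCommGroup M]
    (ρ : ABimodule A M) (P : M → A) : Prop :=
  ∀ u v : M, P u * P v = P (ρ.lsmul (P u) v) ∧ P u * P v = P (ρ.rsmul u (P v))

/-- `P : M → A` is a relative averaging operator iff its graph
`Gr(P) = {(P u, u) | u ∈ M}` is closed under both diassociative operations
`(a,u) ⊣ (b,v) = (a·b, u·b)` and `(a,u) ⊢ (b,v) = (a·b, a·v)` on `A ⊕ M`. -/
theorem isRelAvgOp_iff_graph_subalgebra
    (A M : Type*) [Ring A] [AddCommGroup M] (ρ : ABimodule A M) (P : M → A) :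
    IsRelAvgOp ρ P ↔
      ∀ x ∈ {p : A × M | p.1 = P p.2}, ∀ y ∈ {p : A × M | p.1 = P p.2},
        ((x.1 * y.1, ρ.rsmul x.2 y.1) ∈ {p : A × M | p.1 = P p.2} ∧
         (x.1 * y.1, ρ.lsmul x.1 y.2) ∈ {p : A × M | p.1 = P p.2}) := by
  constructor
  · rintro h ⟨a, u⟩ ha ⟨b, v⟩ hb
    simp only [Set.mem_setOf_eq] at ha hb ⊢
    subst ha hb
    exact ⟨(h u v).2, (h u v).1⟩
  · intro h u v
    have := h (P u, u) rfl (P v, v) rfl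
    simp only [Set.mem_setOf_eq] at this
    exact ⟨this.2, this.1⟩
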